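/- The action of GL(k,ℂ)×GL(k,ℂ) on A_k^n is free: if (a₁,a₂,b,c,x) is an integrable non-degenerate configuration of type (k,n) and (g₀,g₁) ∈ GL(k,ℂ)×GL(k,ℂ) satisfies g₀a₁g₁⁻¹ = a₁, g₀a₂g₁⁻¹ = a₂, g₀b = b, cg₁⁻¹ = c and g₁xg₀⁻¹ = x, then g₀ and g₁ are both the identity matrix. -/

import Mathlib

open Matrix

/-- A configuration `(a₁, a₂, b, c, x)` of type `(k, n)` is *integrable* if
`a₁·x·a₂ − a₂·x·a₁ + b·c = 0`. -/
def Integrable (k n : ℕ) (a₁ a₂ : Matrix (Fin k) (Fin k) ℂ)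
    (b : Matrix (Fin k) (Fin n) ℂ) (c : Matrix (Fin n) (Fin k) ℂ)
    (x : Matrix (Fin k) (Fin k) ℂ) : Prop :=
  a₁ * x * a₂ - a₂ * x * a₁ + b * c = 0

/-- A configuration `(a₁, a₂, b, c, x)` of type `(k, n)` is *non-degenerate* if for all
`(λ₁,λ₂), (μ₁,μ₂) ∈ ℂ²` with `λ₁μ₁ + λ₂μ₂ = 0` and `(μ₁,μ₂) ≠ (0,0)`, there is no nonzero
`v` with `x a₁ v = λ₁ v`, `x a₂ v = λ₂ v`, `(μ₁a₁ + μ₂a₂) v = 0`, `c v = 0`, and no nonzero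
`w` with `x* a₁* w = λ₁ w`, `x* a₂* w = λ₂ w`, `(μ₁a₁* + μ₂a₂*) w = 0`, `b* w = 0`. -/
def Nondegenerate (k n : ℕ) (a₁ a₂ : Matrix (Fin k) (Fin k) ℂ)
    (b : Matrix (Fin k) (Fin n) ℂ) (c : Matrix (Fin n) (Fin k) ℂ)
    (x : Matrix (Fin k) (Fin k) ℂ) : Prop :=
  ∀ lam₁ lam₂ mu₁ mu₂ : ℂ, lam₁ * mu₁ + lam₂ * mu₂ = 0 → (mu₁, mu₂) ≠ (0, 0) →
    (¬ ∃ v : Fin k → ℂ, v ≠ 0 ∧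
        (x * a₁).mulVec v = lam₁ • v ∧ (x * a₂).mulVec v = lam₂ • v ∧
        (mu₁ • a₁ + mu₂ • a₂).mulVec v = 0 ∧ c.mulVec v = 0) ∧
    (¬ ∃ w : Fin k → ℂ, w ≠ 0 ∧
        (xᴴ * a₁ᴴ).mulVec w = lam₁ • w ∧ (xᴴ * a₂ᴴ).mulVec w = lam₂ • w ∧
        (mu₁ • a₁ᴴ + mu₂ • a₂ᴴ).mulVec w = 0 ∧ bᴴ.mulVec w = 0)

/-- A pencil of linear maps `V → U` with `dim U ≤ dim V`, `V ≠ 0`, has a singular member. -/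
lemma pencil_kernel {V U : Type*} [AddCommGroup V] [Module ℂ V]
    [AddCommGroup U] [Module ℂ U] [FiniteDimensional ℂ V] [FiniteDimensional ℂ U]
    (f g : V →ₗ[ℂ] U) (hV : 0 < Module.finrank ℂ V)
    (hUV : Module.finrank ℂ U ≤ Module.finrank ℂ V) :
    ∃ (μ₁ μ₂ : ℂ) (v : V), (μ₁, μ₂) ≠ (0, 0) ∧ v ≠ 0 ∧ μ₁ • f v + μ₂ • g v = 0 := by
  by_cases hg : Function.Injective g
  · have hfr : Module.finrank ℂ (LinearMap.range g) = Module.finrank ℂ V :=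
      LinearMap.finrank_range_of_inj hg
    have hUeq : Module.finrank ℂ (LinearMap.range g) = Module.finrank ℂ U :=
      le_antisymm (Submodule.finrank_le _) (hUV.trans hfr.ge)
    have hrange : LinearMap.range g = ⊤ := Submodule.eq_top_of_finrank_eq hUeq
    have hsurj : Function.Surjective g := LinearMap.range_eq_top.mp hrange
    let e : V ≃ₗ[ℂ] U := LinearEquiv.ofBijective g ⟨hg, hsurj⟩
    let H : Module.End ℂ V := e.symm.toLinearMap ∘ₗ f
    haveI : Nontrivial V := Module.finrank_pos_iff.mp hV
    obtain ⟨t, ht⟩ := Module.End.exists_eigenvalue H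
    obtain ⟨v, hv⟩ := ht.exists_hasEigenvector
    have hHv : e.symm (f v) = t • v := hv.apply_eq_smul
    have hfv : f v = t • g v := by
      have := congrArg e hHv
      rw [LinearEquiv.apply_symm_apply, _root_.map_smul] at this
      exact this
    refine ⟨1, -t, v, by simp, hv.right, ?_⟩
    rw [hfv]
    simp [smul_smul]
  · rw [← LinearMap.ker_eq_bot] at hg
    obtain ⟨v, hv, hv0⟩ := Submodule.exists_mem_ne_zero_of_ne_bot hg
    exact ⟨0, 1, v, by simp, hv0, by simp [LinearMap.mem_ker.mp hv]⟩

/-- Two commuting endomorphisms of a nonzero finite-dimensional complex vector space have a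
common eigenvector. -/
lemma exists_common_eigenvector {V : Type*} [AddCommGroup V] [Module ℂ V]
    [FiniteDimensional ℂ V] [Nontrivial V] (F G : Module.End ℂ V)
    (hFG : F ∘ₗ G = G ∘ₗ F) :
    ∃ (t₁ t₂ : ℂ) (v : V), v ≠ 0 ∧ F v = t₁ • v ∧ G v = t₂ • v := by
  obtain ⟨t₁, ht₁⟩ := Module.End.exists_eigenvalue F
  set E := Module.End.eigenspace F t₁ with hE
  have hGE : ∀ v ∈ E, G v ∈ E := by
    intro v hv
    have hv' : F v = t₁ • v := Module.End.mem_eigenspace_iff.mp hv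
    have : F (G v) = t₁ • G v := by
      have h1 : F (G v) = (F ∘ₗ G) v := rfl
      rw [h1, hFG]
      show G (F v) = t₁ • G v
      rw [hv', _root_.map_smul]
    exact Module.End.mem_eigenspace_iff.mpr this
  haveI : Nontrivial E := Submodule.nontrivial_iff_ne_bot.mpr ht₁
  obtain ⟨t₂, ht₂⟩ := Module.End.exists_eigenvalue (G.restrict hGE)
  obtain ⟨w, hw⟩ := ht₂.exists_hasEigenvector
  refine ⟨t₁, t₂, ↑w, ?_, ?_, ?_⟩
  · simpa using hw.right
  · exact Module.End.mem_eigenspace_iff.mp w.2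
  · have := hw.apply_eq_smul
    have h2 := congrArg (Subtype.val) this
    simpa [LinearMap.restrict_apply] using h2

lemma matrix_rank_zero_iff {k : ℕ} (A : Matrix (Fin k) (Fin k) ℂ) :
    A.rank = 0 ↔ A = 0 := by
  constructor
  · intro h
    have hbot : LinearMap.range A.mulVecLin = ⊥ :=
      Submodule.finrank_eq_zero.mp h
    have hz : A.mulVecLin = 0 := LinearMap.range_eq_bot.mp hbot
    ext i j
    have := congrFun (congrArg DFunLike.coe hz) (Pi.single j 1)
    have h2 := congrFun this i
    simpa [Matrix.mulVecLin_apply, Matrix.mulVec_single] using h2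
  · rintro rfl
    simp [Matrix.rank]

/-- Core lemma: under the stabilizer intertwining relations and the first non-degeneracy
clause, if `rank N₀ ≤ rank N₁` then `N₁ = 0`. -/
lemma core_lemma (k n : ℕ) (a₁ a₂ x N₀ N₁ : Matrix (Fin k) (Fin k) ℂ)
    (b' : Matrix (Fin k) (Fin n) ℂ) (c : Matrix (Fin n) (Fin k) ℂ)
    (h1 : a₁ * N₁ = N₀ * a₁) (h2 : a₂ * N₁ = N₀ * a₂)
    (hxr : x * N₀ = N₁ * x) (hcr : c * N₁ = 0)
    (hbc : a₁ * x * a₂ - a₂ * x * a₁ = b' * c)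
    (hrk : N₀.rank ≤ N₁.rank)
    (hnd : ∀ lam₁ lam₂ mu₁ mu₂ : ℂ, lam₁ * mu₁ + lam₂ * mu₂ = 0 → (mu₁, mu₂) ≠ (0, 0) →
      ¬ ∃ v : Fin k → ℂ, v ≠ 0 ∧
        (x * a₁).mulVec v = lam₁ • v ∧ (x * a₂).mulVec v = lam₂ • v ∧
        (mu₁ • a₁ + mu₂ • a₂).mulVec v = 0 ∧ c.mulVec v = 0) :
    N₁ = 0 := by
  by_contra hN₁
  set S₁ := LinearMap.range N₁.mulVecLin with hS₁def
  set S₀ := LinearMap.range N₀.mulVecLin with hS₀def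
  -- basic invariance facts
  have hcS : ∀ v ∈ S₁, c.mulVec v = 0 := by
    rintro v ⟨u, rfl⟩
    show c.mulVec (N₁.mulVec u) = 0
    rw [Matrix.mulVec_mulVec, hcr, Matrix.zero_mulVec]
  have haS : ∀ (a : Matrix (Fin k) (Fin k) ℂ), a * N₁ = N₀ * a →
      ∀ v ∈ S₁, a.mulVec v ∈ S₀ := by
    rintro a ha v ⟨u, rfl⟩
    refine ⟨a.mulVec u, ?_⟩
    show N₀.mulVec (a.mulVec u) = a.mulVec (N₁.mulVec u)
    rw [Matrix.mulVec_mulVec, Matrix.mulVec_mulVec, ← ha]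
  have hxS : ∀ v ∈ S₀, x.mulVec v ∈ S₁ := by
    rintro v ⟨u, rfl⟩
    refine ⟨x.mulVec u, ?_⟩
    show N₁.mulVec (x.mulVec u) = x.mulVec (N₀.mulVec u)
    rw [Matrix.mulVec_mulVec, Matrix.mulVec_mulVec, ← hxr]
  -- ranks
  have hrank₁ : N₁.rank = Module.finrank ℂ S₁ := rfl
  have hrank₀ : N₀.rank = Module.finrank ℂ S₀ := rfl
  have hpos : 0 < Module.finrank ℂ S₁ := by
    rcases Nat.eq_zero_or_pos (Module.finrank ℂ S₁) with h | h
    · exact absurd ((matrix_rank_zero_iff N₁).mp (hrank₁.trans h)) hN₁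
    · exact h
  -- the restricted pencil
  obtain ⟨μ₁, μ₂, v₀, hμ, hv₀, hv₀eq⟩ :=
    pencil_kernel ((a₁.mulVecLin).restrict (p := S₁) (q := S₀) (haS a₁ h1))
      ((a₂.mulVecLin).restrict (p := S₁) (q := S₀) (haS a₂ h2)) hpos
      (hrank₀ ▸ hrank₁ ▸ hrk)
  set P : Matrix (Fin k) (Fin k) ℂ := μ₁ • a₁ + μ₂ • a₂ with hPdef
  have hPv₀ : P.mulVec (↑v₀ : Fin k → ℂ) = 0 := by
    have := congrArg (Subtype.val) hv₀eq
    simp only [Submodule.coe_add, SetLike.val_smul, LinearMap.restrict_apply,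
      Matrix.mulVecLin_apply, ZeroMemClass.coe_zero] at this
    rw [hPdef, Matrix.add_mulVec, Matrix.smul_mulVec, Matrix.smul_mulVec]
    exact this
  -- the subspace Z
  set Z : Submodule ℂ (Fin k → ℂ) := S₁ ⊓ LinearMap.ker P.mulVecLin with hZdef
  have hZS₁ : ∀ v ∈ Z, v ∈ S₁ := fun v hv => hv.1
  have hZP : ∀ v ∈ Z, P.mulVec v = 0 := fun v hv => hv.2
  have hv₀Z : (↑v₀ : Fin k → ℂ) ∈ Z := ⟨v₀.2, hPv₀⟩
  haveI : Nontrivial Z := by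
    refine nontrivial_of_ne ⟨↑v₀, hv₀Z⟩ 0 ?_
    intro h
    apply hv₀
    have : (↑v₀ : Fin k → ℂ) = 0 := congrArg Subtype.val h
    exact Subtype.ext this
  -- key matrix identities
  have hbc' : a₂ * x * a₁ = a₁ * x * a₂ - b' * c := by
    rw [← hbc]; abel
  have e₁ : P * x * a₁ = a₁ * x * P + (-μ₂) • (b' * c) := by
    have expand1 : P * x * a₁ = μ₁ • (a₁ * x * a₁) + μ₂ • (a₂ * x * a₁) := by
      rw [hPdef, Matrix.add_mul, Matrix.add_mul, Matrix.smul_mul, Matrix.smul_mul,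
        Matrix.smul_mul, Matrix.smul_mul]
    have expand2 : a₁ * x * P = μ₁ • (a₁ * x * a₁) + μ₂ • (a₁ * x * a₂) := by
      rw [hPdef, Matrix.mul_add, Matrix.mul_smul, Matrix.mul_smul]
    rw [expand1, expand2, hbc']
    module
  have e₂ : P * x * a₂ = a₂ * x * P + μ₁ • (b' * c) := by
    have expand1 : P * x * a₂ = μ₁ • (a₁ * x * a₂) + μ₂ • (a₂ * x * a₂) := by
      rw [hPdef, Matrix.add_mul, Matrix.add_mul, Matrix.smul_mul, Matrix.smul_mul,
        Matrix.smul_mul, Matrix.smul_mul]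
    have expand2 : a₂ * x * P = μ₁ • (a₂ * x * a₁) + μ₂ • (a₂ * x * a₂) := by
      rw [hPdef, Matrix.mul_add, Matrix.mul_smul, Matrix.mul_smul]
    rw [expand1, expand2, hbc']
    module
  -- Z is invariant under x*a₁ and x*a₂
  have hinv : ∀ (a : Matrix (Fin k) (Fin k) ℂ), a * N₁ = N₀ * a →
      (P * x * a = a * x * P + (-μ₂) • (b' * c) ∨
       P * x * a = a * x * P + μ₁ • (b' * c)) →
      ∀ v ∈ Z, (x * a).mulVec v ∈ Z := by
    intro a ha he v hv
    have hvS₁ := hZS₁ v hv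
    have hvP := hZP v hv
    have hvc : c.mulVec v = 0 := hcS v hvS₁
    constructor
    · -- in S₁
      rw [← Matrix.mulVec_mulVec]
      exact hxS _ (haS a ha v hvS₁)
    · -- in ker P
      show P.mulVec ((x * a).mulVec v) = 0
      rw [Matrix.mulVec_mulVec, ← Matrix.mul_assoc]
      have key : ∀ M : Matrix (Fin k) (Fin k) ℂ, ∀ t : ℂ,
          P * x * a = a * x * M + t • (b' * c) → M = P → (P * x * a).mulVec v = 0 := by
        rintro M t hM rfl
        rw [hM, Matrix.add_mulVec, ← Matrix.mulVec_mulVec, hvP,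
          Matrix.mulVec_zero, Matrix.smul_mulVec, ← Matrix.mulVec_mulVec, hvc,
          Matrix.mulVec_zero, smul_zero, add_zero]
      rcases he with he | he
      · exact key P (-μ₂) he rfl
      · exact key P μ₁ he rfl
  have hinv₁ := hinv a₁ h1 (Or.inl e₁)
  have hinv₂ := hinv a₂ h2 (Or.inr e₂)
  -- restricted endomorphisms of Z
  set F₁ : Module.End ℂ Z := ((x * a₁).mulVecLin).restrict (p := Z) (q := Z) hinv₁ with hF₁def
  set F₂ : Module.End ℂ Z := ((x * a₂).mulVecLin).restrict (p := Z) (q := Z) hinv₂ with hF₂def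
  have hcomm : F₁ ∘ₗ F₂ = F₂ ∘ₗ F₁ := by
    apply LinearMap.ext
    intro w
    apply Subtype.ext
    have h12 : (x * a₁) * (x * a₂) = (x * a₂) * (x * a₁) + x * b' * c := by
      have hbceq : a₁ * x * a₂ = b' * c + a₂ * x * a₁ := sub_eq_iff_eq_add.mp hbc
      calc (x * a₁) * (x * a₂) = x * (a₁ * x * a₂) := by
            rw [Matrix.mul_assoc x a₁ (x * a₂), ← Matrix.mul_assoc a₁ x a₂]
        _ = x * (b' * c + a₂ * x * a₁) := by rw [hbceq]
        _ = (x * a₂) * (x * a₁) + x * b' * c := by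
            rw [Matrix.mul_add, ← Matrix.mul_assoc x b' c,
              ← Matrix.mul_assoc x (a₂ * x) a₁, ← Matrix.mul_assoc x a₂ x,
              Matrix.mul_assoc (x * a₂) x a₁]
            exact add_comm _ _
    show (x * a₁).mulVec ((x * a₂).mulVec ↑w) = (x * a₂).mulVec ((x * a₁).mulVec ↑w)
    rw [Matrix.mulVec_mulVec, Matrix.mulVec_mulVec, h12, Matrix.add_mulVec,
      ← Matrix.mulVec_mulVec (↑w) (x * b') c, hcS ↑w (hZS₁ ↑w w.2),
      Matrix.mulVec_zero, add_zero]
  obtain ⟨t₁, t₂, w, hw0, hFw₁, hFw₂⟩ := exists_common_eigenvector F₁ F₂ hcomm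
  -- extract ambient data
  set v : Fin k → ℂ := ↑w with hvdef
  have hv0 : v ≠ 0 := by
    intro h
    exact hw0 (Subtype.ext h)
  have hvZ : v ∈ Z := w.2
  have hev₁ : (x * a₁).mulVec v = t₁ • v := by
    have := congrArg (Subtype.val) hFw₁
    exact this
  have hev₂ : (x * a₂).mulVec v = t₂ • v := by
    have := congrArg (Subtype.val) hFw₂
    exact this
  have hPv : P.mulVec v = 0 := hZP v hvZ
  have hcv : c.mulVec v = 0 := hcS v (hZS₁ v hvZ)
  -- orthogonality of (t₁,t₂) and (μ₁,μ₂)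
  have horth : t₁ * μ₁ + t₂ * μ₂ = 0 := by
    have hz : (t₁ * μ₁ + t₂ * μ₂) • v = 0 := by
      have h1 : x.mulVec (P.mulVec v) = 0 := by rw [hPv, Matrix.mulVec_zero]
      have h2 : x.mulVec (P.mulVec v)
          = μ₁ • ((x * a₁).mulVec v) + μ₂ • ((x * a₂).mulVec v) := by
        rw [hPdef, Matrix.add_mulVec, Matrix.smul_mulVec, Matrix.smul_mulVec,
          Matrix.mulVec_add, Matrix.mulVec_smul, Matrix.mulVec_smul,
          Matrix.mulVec_mulVec, Matrix.mulVec_mulVec]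
      rw [hev₁, hev₂] at h2
      rw [← h1, h2]
      rw [smul_smul, smul_smul, ← add_smul]
      ring_nf
    rcases smul_eq_zero.mp hz with h | h
    · exact h
    · exact absurd h hv0
  exact hnd t₁ t₂ μ₁ μ₂ horth hμ ⟨v, hv0, hev₁, hev₂, hPv, hcv⟩

/-- The action of `GL(k,ℂ) × GL(k,ℂ)` on `A_k^n` is free: if `(g₀,g₁)` fixes an integrable
non-degenerate configuration `(a₁,a₂,b,c,x)` of type `(k,n)`, i.e. `g₀a₁g₁⁻¹ = a₁`,
`g₀a₂g₁⁻¹ = a₂`, `g₀b = b`, `cg₁⁻¹ = c` and `g₁xg₀⁻¹ = x`, then `g₀ = 1` and `g₁ = 1`. -/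
theorem action_free_on_Akn (k n : ℕ)
    (a₁ a₂ x : Matrix (Fin k) (Fin k) ℂ)
    (b : Matrix (Fin k) (Fin n) ℂ) (c : Matrix (Fin n) (Fin k) ℂ)
    (g₀ g₁ : GL (Fin k) ℂ)
    (hI : Integrable k n a₁ a₂ b c x)
    (hN : Nondegenerate k n a₁ a₂ b c x)
    (h₁ : (g₀ : Matrix (Fin k) (Fin k) ℂ) * a₁ * (↑g₁⁻¹ : Matrix (Fin k) (Fin k) ℂ) = a₁)
    (h₂ : (g₀ : Matrix (Fin k) (Fin k) ℂ) * a₂ * (↑g₁⁻¹ : Matrix (Fin k) (Fin k) ℂ) = a₂)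
    (hb : (g₀ : Matrix (Fin k) (Fin k) ℂ) * b = b)
    (hc : c * (↑g₁⁻¹ : Matrix (Fin k) (Fin k) ℂ) = c)
    (hx : (g₁ : Matrix (Fin k) (Fin k) ℂ) * x * (↑g₀⁻¹ : Matrix (Fin k) (Fin k) ℂ) = x) :
    (g₀ : Matrix (Fin k) (Fin k) ℂ) = 1 ∧ (g₁ : Matrix (Fin k) (Fin k) ℂ) = 1 := by
  have hg₁inv : (↑g₁⁻¹ : Matrix (Fin k) (Fin k) ℂ) * (↑g₁ : Matrix (Fin k) (Fin k) ℂ) = 1 :=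
    Units.inv_mul g₁
  have hg₀inv : (↑g₀⁻¹ : Matrix (Fin k) (Fin k) ℂ) * (↑g₀ : Matrix (Fin k) (Fin k) ℂ) = 1 :=
    Units.inv_mul g₀
  have hga₁ : (↑g₀ : Matrix (Fin k) (Fin k) ℂ) * a₁ = a₁ * (↑g₁ : Matrix (Fin k) (Fin k) ℂ) := by
    have h := congrArg (fun m : Matrix (Fin k) (Fin k) ℂ =>
      m * (↑g₁ : Matrix (Fin k) (Fin k) ℂ)) h₁
    simp only [Matrix.mul_assoc, hg₁inv, Matrix.mul_one] at h
    exact h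
  have hga₂ : (↑g₀ : Matrix (Fin k) (Fin k) ℂ) * a₂ = a₂ * (↑g₁ : Matrix (Fin k) (Fin k) ℂ) := by
    have h := congrArg (fun m : Matrix (Fin k) (Fin k) ℂ =>
      m * (↑g₁ : Matrix (Fin k) (Fin k) ℂ)) h₂
    simp only [Matrix.mul_assoc, hg₁inv, Matrix.mul_one] at h
    exact h
  have hgx : (↑g₁ : Matrix (Fin k) (Fin k) ℂ) * x = x * (↑g₀ : Matrix (Fin k) (Fin k) ℂ) := by
    have h := congrArg (fun m : Matrix (Fin k) (Fin k) ℂ =>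
      m * (↑g₀ : Matrix (Fin k) (Fin k) ℂ)) hx
    simp only [Matrix.mul_assoc, hg₀inv, Matrix.mul_one] at h
    exact h
  have hcg : c * (↑g₁ : Matrix (Fin k) (Fin k) ℂ) = c := by
    have h := congrArg (fun m : Matrix (Fin n) (Fin k) ℂ =>
      m * (↑g₁ : Matrix (Fin k) (Fin k) ℂ)) hc
    simp only [Matrix.mul_assoc, hg₁inv, Matrix.mul_one] at h
    exact h.symm
  set N₀ : Matrix (Fin k) (Fin k) ℂ := ↑g₀ - 1 with hN₀def
  set N₁ : Matrix (Fin k) (Fin k) ℂ := ↑g₁ - 1 with hN₁def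
  have h1' : a₁ * N₁ = N₀ * a₁ := by
    rw [hN₀def, hN₁def, Matrix.mul_sub, Matrix.sub_mul, Matrix.mul_one, Matrix.one_mul, hga₁]
  have h2' : a₂ * N₁ = N₀ * a₂ := by
    rw [hN₀def, hN₁def, Matrix.mul_sub, Matrix.sub_mul, Matrix.mul_one, Matrix.one_mul, hga₂]
  have hx' : x * N₀ = N₁ * x := by
    rw [hN₀def, hN₁def, Matrix.mul_sub, Matrix.sub_mul, Matrix.mul_one, Matrix.one_mul, hgx]
  have hb' : N₀ * b = 0 := by
    rw [hN₀def, Matrix.sub_mul, Matrix.one_mul, hb, sub_self]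
  have hc' : c * N₁ = 0 := by
    rw [hN₁def, Matrix.mul_sub, Matrix.mul_one, hcg, sub_self]
  have hIeq : a₁ * x * a₂ - a₂ * x * a₁ + b * c = 0 := hI
  have hbc₁ : a₁ * x * a₂ - a₂ * x * a₁ = (-b) * c := by
    rw [Matrix.neg_mul]
    rw [add_eq_zero_iff_eq_neg] at hIeq
    exact hIeq
  have hflip : a₂ * x * a₁ - a₁ * x * a₂ = b * c := by
    rw [← neg_sub, hbc₁, Matrix.neg_mul, neg_neg]
  rcases le_total N₀.rank N₁.rank with hr | hr
  · have hN1 : N₁ = 0 :=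
      core_lemma k n a₁ a₂ x N₀ N₁ (-b) c h1' h2' hx' hc' hbc₁ hr
        (fun l1 l2 m1 m2 ho hm => (hN l1 l2 m1 m2 ho hm).1)
    have hN0 : N₀ = 0 := by
      refine (matrix_rank_zero_iff N₀).mp (Nat.le_zero.mp ?_)
      calc N₀.rank ≤ N₁.rank := hr
        _ = 0 := by rw [hN1, (matrix_rank_zero_iff (0 : Matrix (Fin k) (Fin k) ℂ)).mpr rfl]
    exact ⟨sub_eq_zero.mp hN0, sub_eq_zero.mp hN1⟩
  · have h1'' : a₁ᴴ * N₀ᴴ = N₁ᴴ * a₁ᴴ := by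
      calc a₁ᴴ * N₀ᴴ = (N₀ * a₁)ᴴ := (Matrix.conjTranspose_mul _ _).symm
        _ = (a₁ * N₁)ᴴ := by rw [h1']
        _ = N₁ᴴ * a₁ᴴ := Matrix.conjTranspose_mul _ _
    have h2'' : a₂ᴴ * N₀ᴴ = N₁ᴴ * a₂ᴴ := by
      calc a₂ᴴ * N₀ᴴ = (N₀ * a₂)ᴴ := (Matrix.conjTranspose_mul _ _).symm
        _ = (a₂ * N₁)ᴴ := by rw [h2']
        _ = N₁ᴴ * a₂ᴴ := Matrix.conjTranspose_mul _ _
    have hx'' : xᴴ * N₁ᴴ = N₀ᴴ * xᴴ := by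
      calc xᴴ * N₁ᴴ = (N₁ * x)ᴴ := (Matrix.conjTranspose_mul _ _).symm
        _ = (x * N₀)ᴴ := by rw [hx']
        _ = N₀ᴴ * xᴴ := Matrix.conjTranspose_mul _ _
    have hc'' : bᴴ * N₀ᴴ = 0 := by
      calc bᴴ * N₀ᴴ = (N₀ * b)ᴴ := (Matrix.conjTranspose_mul _ _).symm
        _ = (0 : Matrix (Fin k) (Fin n) ℂ)ᴴ := by rw [hb']
        _ = 0 := Matrix.conjTranspose_zero
    have hbc'' : a₁ᴴ * xᴴ * a₂ᴴ - a₂ᴴ * xᴴ * a₁ᴴ = cᴴ * bᴴ := by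
      have h := congrArg Matrix.conjTranspose hflip
      simpa [Matrix.conjTranspose_sub, Matrix.conjTranspose_mul, Matrix.mul_assoc] using h
    have hrk'' : (N₁ᴴ).rank ≤ (N₀ᴴ).rank := by
      open scoped ComplexOrder in
      rw [Matrix.rank_conjTranspose, Matrix.rank_conjTranspose]
      exact hr
    have hN0 : N₀ᴴ = 0 :=
      core_lemma k n a₁ᴴ a₂ᴴ xᴴ N₁ᴴ N₀ᴴ cᴴ bᴴ h1'' h2'' hx'' hc'' hbc'' hrk''
        (fun l1 l2 m1 m2 ho hm => (hN l1 l2 m1 m2 ho hm).2)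
    have hN0' : N₀ = 0 := Matrix.conjTranspose_eq_zero.mp hN0
    have hN1 : N₁ = 0 := by
      refine (matrix_rank_zero_iff N₁).mp (Nat.le_zero.mp ?_)
      calc N₁.rank ≤ N₀.rank := hr
        _ = 0 := by rw [hN0', (matrix_rank_zero_iff (0 : Matrix (Fin k) (Fin k) ℂ)).mpr rfl]
    exact ⟨sub_eq_zero.mp hN0', sub_eq_zero.mp hN1⟩
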